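/- For every m ≥ 0, in the polynomial ring ℤ[t] one has ∑_{w} t^{des(w)} = 1 + ∑_{r=1}^{m} binom(m,r) · ∑_{u ∈ S_r} t^{des(u)+1}, where the left sum is over all permutations w ∈ S_{m+1} such that m+1 appears before the first descent of w, i.e., for every index i with w(i) > w(i+1) one has m+1 ∈ {w(1),…,w(i)}. (Both sides equal the h-polynomial of the stellohedron, the graph-associahedron of the star K_{1,m}.) -/

import Mathlib

open Classical Polynomial

set_option maxHeartbeats 800000

/-- Number of descents of a permutation. -/
def des {n : ℕ} (w : Equiv.Perm (Fin n)) : ℕ :=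
  (Finset.univ.filter fun i : Fin n =>
    ∃ j : Fin n, (j : ℕ) = (i : ℕ) + 1 ∧ w j < w i).card

/-- `m+1` (the largest value, `Fin.last m`) appears before the first descent
of `w ∈ S_{m+1}`: for every descent position `i`, the value `m+1` occurs among
`w(1), …, w(i)`. -/
def LastBeforeFirstDescent {m : ℕ} (w : Equiv.Perm (Fin (m + 1))) : Prop :=
  ∀ i j : Fin (m + 1), (i : ℕ) + 1 = (j : ℕ) → w j < w i →
    ∃ k : Fin (m + 1), k ≤ i ∧ w k = Fin.last m

namespace Stello
variable {m : ℕ}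
def Pset (m : ℕ) (T : Finset (Fin (m+1))) : Finset (Fin (m+1)) :=
  Finset.univ \ insert (Fin.last m) T
lemma Pset_card {p r : ℕ} (hpr : p + r = m) {T : Finset (Fin (m+1))}
    (hT : T.card = r) (hl : Fin.last m ∉ T) : (Pset m T).card = p := by
  rw [Pset, Finset.card_sdiff_of_subset (Finset.subset_univ _), Finset.card_insert_of_notMem hl,
    Finset.card_univ, Fintype.card_fin, hT]; omega
lemma mem_Pset {T : Finset (Fin (m+1))} {v} : v ∈ Pset m T ↔ v ≠ Fin.last m ∧ v ∉ T := by
  simp [Pset, not_or]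
def stF (p r : ℕ) (hpr : p + r = m) (T : Finset (Fin (m+1))) (hT : T.card = r)
    (hl : Fin.last m ∉ T) (u : Equiv.Perm (Fin r)) : Fin (m+1) → Fin (m+1) :=
  fun i =>
    if h : (i : ℕ) < p then (Pset m T).orderEmbOfFin (Pset_card hpr hT hl) ⟨i, h⟩
    else if h2 : (i : ℕ) = p then Fin.last m
    else T.orderEmbOfFin hT (u ⟨(i : ℕ) - p - 1, by have := i.isLt; omega⟩)

section
variable {p r : ℕ} (hpr : p + r = m) (T : Finset (Fin (m+1))) (hT : T.card = r)
  (hl : Fin.last m ∉ T) (u : Equiv.Perm (Fin r))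

lemma stF_lt {i : Fin (m+1)} (h : (i : ℕ) < p) :
    stF p r hpr T hT hl u i = (Pset m T).orderEmbOfFin (Pset_card hpr hT hl) ⟨i, h⟩ := by
  simp only [stF, dif_pos h]
lemma stF_eq {i : Fin (m+1)} (h : (i : ℕ) = p) :
    stF p r hpr T hT hl u i = Fin.last m := by
  simp only [stF, dif_neg (by omega : ¬ (i : ℕ) < p), dif_pos h]
lemma stF_gt {i : Fin (m+1)} (h : p < (i : ℕ)) :
    stF p r hpr T hT hl u i
      = T.orderEmbOfFin hT (u ⟨(i : ℕ) - p - 1, by have := i.isLt; omega⟩) := by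
  simp only [stF, dif_neg (by omega : ¬ (i : ℕ) < p), dif_neg (by omega : ¬ (i : ℕ) = p)]
lemma stF_inj : Function.Injective (stF p r hpr T hT hl u) := by
  intro i j hij
  have hmemP : ∀ x, (Pset m T).orderEmbOfFin (Pset_card hpr hT hl) x ∈ Pset m T :=
    fun x => Finset.orderEmbOfFin_mem _ _ _
  have hmemT : ∀ x, T.orderEmbOfFin hT x ∈ T := fun x => Finset.orderEmbOfFin_mem _ _ _
  rcases lt_trichotomy ((i : ℕ)) p with hi | hi | hi <;>
    rcases lt_trichotomy ((j : ℕ)) p with hj | hj | hj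
  · rw [stF_lt hpr T hT hl u hi, stF_lt hpr T hT hl u hj] at hij
    have := (Finset.orderEmbOfFin (Pset m T) (Pset_card hpr hT hl)).injective hij
    have : ((⟨(i:ℕ), hi⟩ : Fin p) : ℕ) = ((⟨(j:ℕ), hj⟩ : Fin p) : ℕ) := by rw [this]
    exact Fin.ext (by simpa using this)
  · rw [stF_lt hpr T hT hl u hi, stF_eq hpr T hT hl u hj] at hij
    exact absurd ((mem_Pset.mp (hmemP _)).1 hij) (by simp)
  · rw [stF_lt hpr T hT hl u hi, stF_gt hpr T hT hl u hj] at hij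
    exact absurd (hij ▸ (mem_Pset.mp (hmemP _)).2) (by simp [hmemT])
  · rw [stF_eq hpr T hT hl u hi, stF_lt hpr T hT hl u hj] at hij
    exact absurd ((mem_Pset.mp (hmemP _)).1 hij.symm) (by simp)
  · exact Fin.ext (hi.trans hj.symm)
  · rw [stF_eq hpr T hT hl u hi, stF_gt hpr T hT hl u hj] at hij
    exact absurd (hij ▸ hmemT _) hl
  · rw [stF_gt hpr T hT hl u hi, stF_lt hpr T hT hl u hj] at hij
    exact absurd (hij.symm ▸ (mem_Pset.mp (hmemP _)).2) (by simp [hmemT])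
  · rw [stF_gt hpr T hT hl u hi, stF_eq hpr T hT hl u hj] at hij
    exact absurd (hij ▸ hmemT _) hl
  · rw [stF_gt hpr T hT hl u hi, stF_gt hpr T hT hl u hj] at hij
    have h1 := u.injective ((Finset.orderEmbOfFin T hT).injective hij)
    have h2 : (i : ℕ) - p - 1 = (j : ℕ) - p - 1 := by
      have := congrArg (Fin.val) h1; simpa using this
    exact Fin.ext (by omega)

noncomputable def stW : Equiv.Perm (Fin (m+1)) :=
  Equiv.ofBijective _ (Finite.injective_iff_bijective.mp (stF_inj hpr T hT hl u))

lemma stW_apply (i : Fin (m+1)) : stW hpr T hT hl u i = stF p r hpr T hT hl u i := rfl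

/-- strict monotonicity on the prefix (up to and including position `p`) -/
lemma stW_prefix_lt {i j : Fin (m+1)} (hij : (i : ℕ) < (j : ℕ)) (hjp : (j : ℕ) ≤ p) :
    stW hpr T hT hl u i < stW hpr T hT hl u j := by
  rcases eq_or_lt_of_le hjp with hjp' | hjp'
  · rw [stW_apply, stW_apply, stF_eq hpr T hT hl u hjp', stF_lt hpr T hT hl u (by omega)]
    exact Fin.lt_last_iff_ne_last.mpr (mem_Pset.mp (Finset.orderEmbOfFin_mem _ _ _)).1
  · rw [stW_apply, stW_apply, stF_lt hpr T hT hl u (by omega), stF_lt hpr T hT hl u (by omega)]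
    exact (Finset.orderEmbOfFin (Pset m T) (Pset_card hpr hT hl)).strictMono (by simpa using hij)

lemma stW_lbfd : LastBeforeFirstDescent (stW hpr T hT hl u) := by
  intro i j hj hdesc
  by_cases hip : (i : ℕ) < p
  · exact absurd hdesc (asymm (stW_prefix_lt hpr T hT hl u (by omega) (by omega)))
  · refine ⟨⟨p, by omega⟩, by simpa [Fin.le_def] using not_lt.mp hip, ?_⟩
    rw [stW_apply, stF_eq hpr T hT hl u rfl]

lemma stW_symm_last (hp : p < m + 1) : ((stW hpr T hT hl u).symm (Fin.last m) : ℕ) = p := by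
  have : stW hpr T hT hl u ⟨p, hp⟩ = Fin.last m := by
    rw [stW_apply, stF_eq hpr T hT hl u rfl]
  rw [← this, Equiv.symm_apply_apply]

lemma stW_gt {i : Fin (m+1)} (h : p < (i : ℕ)) :
    stW hpr T hT hl u i
      = T.orderEmbOfFin hT (u ⟨(i : ℕ) - p - 1, by have := i.isLt; omega⟩) :=
  stF_gt hpr T hT hl u h

lemma stW_eq {i : Fin (m+1)} (h : (i : ℕ) = p) :
    stW hpr T hT hl u i = Fin.last m := stF_eq hpr T hT hl u h

lemma stW_tail (j : Fin r) :
    stW hpr T hT hl u ⟨p + 1 + (j : ℕ), by have := j.isLt; omega⟩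
      = T.orderEmbOfFin hT (u j) := by
  rw [stW_gt hpr T hT hl u (by simp; omega)]
  exact congrArg _ (congrArg u (Fin.mk_eq_mk.mpr (by simp; omega)))

lemma des_stW (hr : 1 ≤ r) : des (stW hpr T hT hl u) = des u + 1 := by
  have hpm : p < m := by omega
  have key : (Finset.univ.filter fun i : Fin (m+1) =>
        ∃ j : Fin (m+1), (j : ℕ) = (i : ℕ) + 1 ∧ stW hpr T hT hl u j < stW hpr T hT hl u i)
      = insert (⟨p, by omega⟩ : Fin (m+1))
          ((Finset.univ.filter fun i : Fin r =>
            ∃ j : Fin r, (j : ℕ) = (i : ℕ) + 1 ∧ u j < u i).image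
            (fun j : Fin r => (⟨p + 1 + (j : ℕ), by have := j.isLt; omega⟩ : Fin (m+1)))) := by
    ext i
    simp only [Finset.mem_insert, Finset.mem_image, Finset.mem_filter, Finset.mem_univ, true_and]
    constructor
    · rintro ⟨j, hj1, hj2⟩
      rcases lt_trichotomy ((i : ℕ)) p with hi | hi | hi
      · exact absurd hj2 (asymm (stW_prefix_lt hpr T hT hl u (by omega) (by omega)))
      · exact Or.inl (Fin.ext hi)
      · right
        have him : (i : ℕ) < m := by have := j.isLt; omega
        have hwi := stW_gt hpr T hT hl u hi
        have hwj := stW_gt hpr T hT hl u (show p < (j : ℕ) by omega)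
        rw [hwi, hwj] at hj2
        have hu := (Finset.orderEmbOfFin T hT).lt_iff_lt.mp hj2
        have huu : u ⟨(j : ℕ) - p - 1, by have := j.isLt; omega⟩
            = u ⟨(i : ℕ) - p, by omega⟩ := congrArg u (Fin.mk_eq_mk.mpr (by omega))
        rw [huu] at hu
        exact ⟨⟨(i : ℕ) - p - 1, by omega⟩, ⟨⟨(i : ℕ) - p, by omega⟩, by simp; omega, hu⟩,
          Fin.ext (by simp; omega)⟩
    · rintro (rfl | ⟨jj, ⟨kk, hk1, hk2⟩, rfl⟩)
      · refine ⟨⟨p + 1, by omega⟩, by simp, ?_⟩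
        have h1 := stW_gt hpr T hT hl u (show p < ((⟨p + 1, by omega⟩ : Fin (m+1)) : ℕ) by simp)
        have h2 := stW_eq hpr T hT hl u (show ((⟨p, by omega⟩ : Fin (m+1)) : ℕ) = p from rfl)
        rw [h1, h2]
        refine Fin.lt_last_iff_ne_last.mpr ?_
        intro hcon
        exact hl (hcon ▸ Finset.orderEmbOfFin_mem _ _ _)
      · have hjjr : (jj : ℕ) + 1 < r := by have := kk.isLt; omega
        refine ⟨⟨p + 1 + (kk : ℕ), by have := kk.isLt; omega⟩, by simp; omega, ?_⟩
        have h := (Finset.orderEmbOfFin T hT).lt_iff_lt.mpr hk2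
        rw [← stW_tail hpr T hT hl u kk, ← stW_tail hpr T hT hl u jj] at h
        exact h
  have hnotmem : (⟨p, by omega⟩ : Fin (m+1)) ∉
      ((Finset.univ.filter fun i : Fin r =>
        ∃ j : Fin r, (j : ℕ) = (i : ℕ) + 1 ∧ u j < u i).image
        (fun j : Fin r => (⟨p + 1 + (j : ℕ), by have := j.isLt; omega⟩ : Fin (m+1)))) := by
    intro h
    obtain ⟨x, -, hcon⟩ := Finset.mem_image.mp h
    have := congrArg Fin.val hcon
    simp at this
    omega
  have hinj : Function.Injective
      (fun j : Fin r => (⟨p + 1 + (j : ℕ), by have := j.isLt; omega⟩ : Fin (m+1))) := by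
    intro a b hab
    have := congrArg Fin.val hab
    exact Fin.ext (by simpa using this)
  rw [des, key, Finset.card_insert_of_notMem hnotmem, Finset.card_image_of_injective _ hinj, des]

lemma stW_mem_T_iff {v : Fin (m+1)} :
    v ∈ T ↔ p < (((stW hpr T hT hl u).symm v : Fin (m+1)) : ℕ) := by
  constructor
  · intro hv
    have : v ∈ Set.range (T.orderEmbOfFin hT) := by
      rw [Finset.range_orderEmbOfFin]; exact hv
    obtain ⟨jx, hjx⟩ := this
    have h1 := stW_tail hpr T hT hl u (u.symm jx)
    rw [Equiv.apply_symm_apply, hjx] at h1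
    rw [← h1, Equiv.symm_apply_apply]
    simp only [Fin.val_mk]
    omega
  · intro hv
    have := stW_gt hpr T hT hl u hv
    rw [Equiv.apply_symm_apply] at this
    rw [this]
    exact Finset.orderEmbOfFin_mem _ _ _

lemma stW_pair_inj {T' : Finset (Fin (m+1))} (hT' : T'.card = r) (hl' : Fin.last m ∉ T')
    (u' : Equiv.Perm (Fin r)) (h : stW hpr T hT hl u = stW hpr T' hT' hl' u') :
    T = T' ∧ u = u' := by
  have hTT : T = T' := by
    ext v
    rw [stW_mem_T_iff hpr T hT hl u, stW_mem_T_iff hpr T' hT' hl' u', h]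
  subst hTT
  refine ⟨rfl, Equiv.ext fun j => ?_⟩
  have h1 := stW_tail hpr T hT hl u j
  have h2 := stW_tail hpr T hT hl' u' j
  rw [h, h2] at h1
  exact ((Finset.orderEmbOfFin T hT).injective h1).symm

end

section TU
variable {m p r : ℕ}

def Tset (p : ℕ) (w : Equiv.Perm (Fin (m+1))) : Finset (Fin (m+1)) :=
  Finset.image ⇑w (Finset.univ.filter fun i : Fin (m+1) => p < (i : ℕ))

lemma mem_Tset_tail (hpr : p + r = m) (w : Equiv.Perm (Fin (m+1))) (j : Fin r) :
    w ⟨p + 1 + (j : ℕ), by have := j.isLt; omega⟩ ∈ Tset p w := by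
  apply Finset.mem_image_of_mem
  simp only [Finset.mem_filter, Finset.mem_univ, true_and]
  show p < p + 1 + (j : ℕ)
  omega

def gfun (hpr : p + r = m) (w : Equiv.Perm (Fin (m+1))) (hTc : (Tset p w).card = r) :
    Fin r → Fin r :=
  fun j => ((Tset p w).orderIsoOfFin hTc).symm
    ⟨w ⟨p + 1 + (j : ℕ), by have := j.isLt; omega⟩, mem_Tset_tail hpr w j⟩

lemma gfun_spec (hpr : p + r = m) (w : Equiv.Perm (Fin (m+1))) (hTc : (Tset p w).card = r)
    (j : Fin r) :
    (Tset p w).orderEmbOfFin hTc (gfun hpr w hTc j)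
      = w ⟨p + 1 + (j : ℕ), by have := j.isLt; omega⟩ := by
  show (((Tset p w).orderIsoOfFin hTc) (gfun hpr w hTc j) : Fin (m+1)) = _
  rw [gfun, OrderIso.apply_symm_apply]

lemma gfun_inj (hpr : p + r = m) (w : Equiv.Perm (Fin (m+1))) (hTc : (Tset p w).card = r) :
    Function.Injective (gfun hpr w hTc) := by
  intro a b hab
  have h2 := congrArg ((Tset p w).orderEmbOfFin hTc) hab
  rw [gfun_spec hpr w hTc a, gfun_spec hpr w hTc b] at h2
  have := congrArg Fin.val (w.injective h2)
  exact Fin.ext (by simpa using this)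

noncomputable def uW (hpr : p + r = m) (w : Equiv.Perm (Fin (m+1)))
    (hTc : (Tset p w).card = r) : Equiv.Perm (Fin r) :=
  Equiv.ofBijective _ (Finite.injective_iff_bijective.mp (gfun_inj hpr w hTc))

lemma uW_spec (hpr : p + r = m) (w : Equiv.Perm (Fin (m+1))) (hTc : (Tset p w).card = r)
    (j : Fin r) :
    (Tset p w).orderEmbOfFin hTc (uW hpr w hTc j)
      = w ⟨p + 1 + (j : ℕ), by have := j.isLt; omega⟩ :=
  gfun_spec hpr w hTc j

end TU

section
variable {p r : ℕ} (hpr : p + r = m) (T : Finset (Fin (m+1))) (hT : T.card = r)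
  (hl : Fin.last m ∉ T) (u : Equiv.Perm (Fin r))

lemma lbfd_mono (w : Equiv.Perm (Fin (m+1))) (hw : LastBeforeFirstDescent w)
    (hp : ((w.symm (Fin.last m)) : ℕ) = p) :
    ∀ i j : Fin (m+1), (i : ℕ) < (j : ℕ) → (j : ℕ) ≤ p → w i < w j := by
  have hpm : p ≤ m := by
    have := (w.symm (Fin.last m)).isLt
    omega
  have adj : ∀ (c : ℕ) (_hc : c + 1 ≤ p), w ⟨c, by omega⟩ < w ⟨c + 1, by omega⟩ := by
    intro c hc
    rcases lt_or_ge (w ⟨c, by omega⟩) (w ⟨c + 1, by omega⟩) with h | h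
    · exact h
    have hne : w ⟨c + 1, by omega⟩ ≠ w ⟨c, by omega⟩ := by
      intro hcon
      have := congrArg Fin.val (w.injective hcon)
      simp at this
    have hlt : w ⟨c + 1, by omega⟩ < w ⟨c, by omega⟩ := lt_of_le_of_ne h hne
    obtain ⟨k, hk1, hk2⟩ := hw ⟨c, by omega⟩ ⟨c + 1, by omega⟩ (by simp) hlt
    have hksymm : k = w.symm (Fin.last m) := by rw [← hk2, Equiv.symm_apply_apply]
    have hkp : (k : ℕ) = p := by rw [hksymm]; exact hp
    have hkc : (k : ℕ) ≤ c := hk1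
    omega
  have mono : ∀ (d a : ℕ) (_h0 : 0 < d) (_hle : a + d ≤ p),
      w ⟨a, by omega⟩ < w ⟨a + d, by omega⟩ := by
    intro d
    induction d with
    | zero => intro a h0; omega
    | succ d ih =>
      intro a h0 hle
      rcases Nat.eq_zero_or_pos d with rfl | hd
      · exact adj a (by omega)
      · exact (ih a hd (by omega)).trans (adj (a + d) (by omega))
  intro i j hij hjp
  have h0 := mono ((j : ℕ) - (i : ℕ)) (i : ℕ) (by omega) (by omega)
  have e1 : (⟨(i : ℕ), by omega⟩ : Fin (m+1)) = i := Fin.eta i _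
  have e2 : (⟨(i : ℕ) + ((j : ℕ) - (i : ℕ)), by omega⟩ : Fin (m+1)) = j :=
    Fin.ext (by simp; omega)
  rw [e1, e2] at h0
  exact h0

lemma exists_stW (w : Equiv.Perm (Fin (m+1))) (hw : LastBeforeFirstDescent w)
    (hp : ((w.symm (Fin.last m)) : ℕ) = p) :
    ∃ (T : Finset (Fin (m+1))) (hT : T.card = r) (hl : Fin.last m ∉ T)
      (uu : Equiv.Perm (Fin r)), stW hpr T hT hl uu = w := by
  have hpm : p ≤ m := by omega
  have hmono := lbfd_mono w hw hp
  have hTailcard : (Finset.univ.filter (fun i : Fin (m+1) => p < (i : ℕ))).card = r := by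
    have hht : (Finset.univ.filter (fun i : Fin (m+1) => p < (i : ℕ)))
        = Finset.Ioi (⟨p, by omega⟩ : Fin (m+1)) := by
      ext i
      simp [Finset.mem_Ioi, Fin.lt_def]
    rw [hht, Fin.card_Ioi]
    simp
    omega
  have hTc : (Tset p w).card = r := by
    rw [Tset, Finset.card_image_of_injective _ w.injective, hTailcard]
  have hTl : Fin.last m ∉ Tset p w := by
    intro hmem
    obtain ⟨i, hi, hwi⟩ := Finset.mem_image.mp hmem
    simp only [Finset.mem_filter, Finset.mem_univ, true_and] at hi
    have h1 : i = w.symm (Fin.last m) := by rw [← hwi, Equiv.symm_apply_apply]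
    have : (i : ℕ) = p := by rw [h1]; exact hp
    omega
  refine ⟨Tset p w, hTc, hTl, uW hpr w hTc, ?_⟩
  apply Equiv.ext
  intro i
  rcases lt_trichotomy ((i : ℕ)) p with hi | hi | hi
  · rw [stW_apply, stF_lt hpr _ hTc hTl _ hi]
    have hfs : ∀ x : Fin p, w ⟨(x : ℕ), by have := x.isLt; omega⟩ ∈
        Pset m (Tset p w) := by
      intro x
      rw [mem_Pset]
      constructor
      · intro hcon
        have h4 : (⟨(x : ℕ), by have := x.isLt; omega⟩ : Fin (m+1)) = w.symm (Fin.last m) :=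
          (Equiv.eq_symm_apply w).mpr hcon
        have h5 := congrArg Fin.val h4
        have h6 : (x : ℕ) = ((w.symm (Fin.last m)) : ℕ) := h5
        rw [hp] at h6
        have := x.isLt
        omega
      · intro hcon
        obtain ⟨i', hi', hwi'⟩ := Finset.mem_image.mp hcon
        simp only [Finset.mem_filter, Finset.mem_univ, true_and] at hi'
        have := congrArg Fin.val (w.injective hwi')
        simp at this
        omega
    have hsm : StrictMono (fun x : Fin p => w ⟨(x : ℕ), by have := x.isLt; omega⟩) := by
      intro a b hab
      exact hmono _ _ (by simpa using hab) (by show (b : ℕ) ≤ p; have := b.isLt; omega)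
    have huniq := Finset.orderEmbOfFin_unique (Pset_card hpr hTc hTl) hfs hsm
    have h5 := congrFun huniq ⟨(i : ℕ), hi⟩
    simp only [Fin.eta] at h5
    exact h5.symm
  · rw [stW_apply, stF_eq hpr _ hTc hTl _ hi]
    have h6 : i = w.symm (Fin.last m) := Fin.ext (by rw [hp]; exact hi)
    rw [h6, Equiv.apply_symm_apply]
  · rw [stW_apply, stF_gt hpr _ hTc hTl _ hi]
    have h8 := uW_spec hpr w hTc ⟨(i : ℕ) - p - 1, by have := i.isLt; omega⟩
    have e : (⟨p + 1 + (((⟨(i : ℕ) - p - 1, by have := i.isLt; omega⟩ : Fin r)) : ℕ),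
        by have := i.isLt; omega⟩ : Fin (m+1)) = i := Fin.ext (by simp; omega)
    rw [e] at h8
    exact h8

end

section
variable {m p r : ℕ}

lemma fiber_sum (hpr : p + r = m) (hr : 1 ≤ r) :
    ∑ w ∈ Finset.univ.filter (fun w : Equiv.Perm (Fin (m+1)) =>
        LastBeforeFirstDescent w ∧ ((w.symm (Fin.last m)) : ℕ) = p),
      (X : Polynomial ℤ) ^ des w
    = C ((m.choose r : ℤ)) * ∑ u : Equiv.Perm (Fin r), (X : Polynomial ℤ) ^ (des u + 1) := by
  classical
  have hA : ∀ (Tu : Finset (Fin (m+1)) × Equiv.Perm (Fin r)),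
      Tu ∈ (Finset.powersetCard r (Finset.univ.erase (Fin.last m))) ×ˢ
        (Finset.univ : Finset (Equiv.Perm (Fin r))) →
      Tu.1.card = r ∧ Fin.last m ∉ Tu.1 := by
    intro Tu hTu
    have h1 := (Finset.mem_product.mp hTu).1
    have h2 := Finset.mem_powersetCard.mp h1
    exact ⟨h2.2, fun hc => (Finset.mem_erase.mp (h2.1 hc)).1 rfl⟩
  have keysum : ∑ Tu ∈ (Finset.powersetCard r (Finset.univ.erase (Fin.last m))) ×ˢ
        (Finset.univ : Finset (Equiv.Perm (Fin r))),
        (X : Polynomial ℤ) ^ (des Tu.2 + 1)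
      = ∑ w ∈ Finset.univ.filter (fun w : Equiv.Perm (Fin (m+1)) =>
          LastBeforeFirstDescent w ∧ ((w.symm (Fin.last m)) : ℕ) = p),
        (X : Polynomial ℤ) ^ des w := Finset.sum_bij
    (i := fun Tu hTu => stW hpr Tu.1 (hA Tu hTu).1 (hA Tu hTu).2 Tu.2)
    (hi := by
      intro Tu hTu
      rw [Finset.mem_filter]
      exact ⟨Finset.mem_univ _, stW_lbfd hpr _ _ _ _,
        stW_symm_last hpr _ _ _ _ (by omega)⟩)
    (i_inj := by
      intro a ha b hb hab
      obtain ⟨h1, h2⟩ := stW_pair_inj hpr a.1 (hA a ha).1 (hA a ha).2 a.2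
        (hA b hb).1 (hA b hb).2 b.2 hab
      exact Prod.ext h1 h2)
    (i_surj := by
      intro w hw
      rw [Finset.mem_filter] at hw
      obtain ⟨T, hT, hl, uu, heq⟩ := exists_stW hpr w hw.2.1 hw.2.2
      refine ⟨(T, uu), ?_, ?_⟩
      · rw [Finset.mem_product]
        refine ⟨Finset.mem_powersetCard.mpr ⟨?_, hT⟩, Finset.mem_univ _⟩
        intro v hv
        exact Finset.mem_erase.mpr ⟨fun hvl => hl (hvl ▸ hv), Finset.mem_univ _⟩
      · exact heq)
    (h := by
      intro Tu hTu
      rw [des_stW hpr _ _ _ _ hr])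
  rw [← keysum, Finset.sum_product]
  have hconst : ∀ x ∈ Finset.powersetCard r (Finset.univ.erase (Fin.last m)),
      (∑ y : Equiv.Perm (Fin r), (X : Polynomial ℤ) ^ (des (x, y).2 + 1))
        = ∑ u : Equiv.Perm (Fin r), (X : Polynomial ℤ) ^ (des u + 1) := fun x _ => rfl
  rw [Finset.sum_congr rfl hconst, Finset.sum_const, Finset.card_powersetCard,
    Finset.card_erase_of_mem (Finset.mem_univ _), Finset.card_univ, Fintype.card_fin,
    Nat.add_sub_cancel, nsmul_eq_mul, Polynomial.C_eq_natCast]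

lemma des_one : des (1 : Equiv.Perm (Fin (m+1))) = 0 := by
  rw [des, Finset.card_eq_zero, Finset.filter_eq_empty_iff]
  rintro i - ⟨j, hj1, hj2⟩
  have : (j : ℕ) < (i : ℕ) := hj2
  omega

lemma lbfd_one : LastBeforeFirstDescent (1 : Equiv.Perm (Fin (m+1))) := by
  intro i j hj hlt
  exfalso
  have : (j : ℕ) < (i : ℕ) := hlt
  omega

lemma fiber_last :
    Finset.univ.filter (fun w : Equiv.Perm (Fin (m+1)) =>
      LastBeforeFirstDescent w ∧ ((w.symm (Fin.last m)) : ℕ) = m) = {1} := by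
  ext w
  simp only [Finset.mem_filter, Finset.mem_univ, true_and, Finset.mem_singleton]
  constructor
  · rintro ⟨hw, hp⟩
    have hmono := lbfd_mono (p := m) w hw hp
    have hsm : StrictMono ⇑w := by
      intro a b hab
      exact hmono a b hab (by have := b.isLt; omega)
    have hcoe := congrFun (congrArg (fun f : Fin (m+1) ≃o Fin (m+1) =>
      (f : Fin (m+1) → Fin (m+1)))
      (Subsingleton.elim (StrictMono.orderIsoOfSurjective ⇑w hsm w.surjective)
        (OrderIso.refl _)))
    apply Equiv.ext
    intro i
    have h1 := hcoe i
    simp only [StrictMono.coe_orderIsoOfSurjective, OrderIso.refl_apply] at h1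
    exact h1
  · rintro rfl
    refine ⟨lbfd_one, ?_⟩
    rfl

end
end Stello

open Stello in
/-- The `h`-polynomial of the stellohedron: the descent generating function
of permutations of `S_{m+1}` in which `m+1` appears before the first descent
equals `1 + ∑_{r=1}^m C(m,r) ∑_{u ∈ S_r} t^{des(u)+1}`. -/
theorem stellohedron_h_polynomial (m : ℕ) :
    ∑ w ∈ Finset.univ.filter
        (fun w : Equiv.Perm (Fin (m + 1)) => LastBeforeFirstDescent w),
        (X : Polynomial ℤ) ^ des w
      = 1 + ∑ r ∈ Finset.Icc 1 m, C ((m.choose r : ℤ)) *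
          ∑ u : Equiv.Perm (Fin r), (X : Polynomial ℤ) ^ (des u + 1) := by
  classical
  have hmap : ∀ w ∈ Finset.univ.filter
      (fun w : Equiv.Perm (Fin (m + 1)) => LastBeforeFirstDescent w),
      ((w.symm (Fin.last m)) : ℕ) ∈ Finset.range (m + 1) := by
    intro w _
    exact Finset.mem_range.mpr (Fin.isLt _)
  rw [← Finset.sum_fiberwise_of_maps_to hmap]
  have hff : ∀ p : ℕ,
      (Finset.univ.filter (fun w : Equiv.Perm (Fin (m + 1)) =>
        LastBeforeFirstDescent w)).filter
        (fun w => ((w.symm (Fin.last m)) : ℕ) = p)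
      = Finset.univ.filter (fun w : Equiv.Perm (Fin (m + 1)) =>
          LastBeforeFirstDescent w ∧ ((w.symm (Fin.last m)) : ℕ) = p) := by
    intro p
    rw [Finset.filter_filter]
  rw [Finset.sum_range_succ, hff m, fiber_last, Finset.sum_singleton, des_one, pow_zero]
  have hcongr : ∀ p ∈ Finset.range m,
      ∑ w ∈ (Finset.univ.filter (fun w : Equiv.Perm (Fin (m + 1)) =>
          LastBeforeFirstDescent w)).filter
          (fun w => ((w.symm (Fin.last m)) : ℕ) = p),
        (X : Polynomial ℤ) ^ des w
      = C ((m.choose (m - p) : ℤ)) *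
          ∑ u : Equiv.Perm (Fin (m - p)), (X : Polynomial ℤ) ^ (des u + 1) := by
    intro p hp
    have hpm := Finset.mem_range.mp hp
    rw [hff p]
    exact fiber_sum (by omega : p + (m - p) = m) (by omega)
  rw [Finset.sum_congr rfl hcongr]
  have hre : ∑ p ∈ Finset.range m, (C ((m.choose (m - p) : ℤ)) *
        ∑ u : Equiv.Perm (Fin (m - p)), (X : Polynomial ℤ) ^ (des u + 1))
      = ∑ r ∈ Finset.Icc 1 m, (C ((m.choose r : ℤ)) *
        ∑ u : Equiv.Perm (Fin r), (X : Polynomial ℤ) ^ (des u + 1)) := by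
    refine Finset.sum_nbij' (i := fun p => m - p) (j := fun r => m - r) ?_ ?_ ?_ ?_ ?_
    · intro a ha; simp only [Finset.mem_range] at ha; simp only [Finset.mem_Icc]; omega
    · intro b hb; simp only [Finset.mem_Icc] at hb; simp only [Finset.mem_range]; omega
    · intro a ha; simp only [Finset.mem_range] at ha; show m - (m - a) = a; omega
    · intro b hb; simp only [Finset.mem_Icc] at hb; show m - (m - b) = b; omega
    · intro a ha; rfl
  rw [hre, add_comm]
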